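/- Let Γ be a finite set containing two distinct points a and b, and let λ : Γ → [0, ∞) satisfy λ(a) = λ(b) and |λ| := Σ_{α∈Γ} λ(α) > 0. Let Ψ be a random element of ℤ≥0^Γ with E[Σ_{α∈Γ} Ψ(α)] < ∞ satisfying E[B_0 g(Ψ)] = 0 for every bounded function g : ℤ≥0^Γ → ℝ, and suppose P[Ψ = δ_a] = P[Ψ = δ_b]. Then the total number of points |Ψ| = Σ_{α∈Γ} Ψ(α) satisfies d_TV(L(|Ψ|), Po(|λ|)) ≤ P[Ψ = δ_a] · (1 − e^{−|λ|}) / |λ|. -/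

import Mathlib

open MeasureTheory

/-- `Po(ν)(A) = Σ_{j ∈ A} e^{−ν} ν^j / j!`. -/
noncomputable def poissonProb (nu : ℝ) (A : Set ℕ) : ℝ :=
  ∑' j : ℕ, Set.indicator A (fun j => Real.exp (-nu) * nu ^ j / (Nat.factorial j : ℝ)) j

/-- The configuration with exactly one point at `a`. -/
def deltaAt {Γ : Type*} [DecidableEq Γ] (a : Γ) : Γ → ℕ := fun x => if x = a then 1 else 0

/-- The Poisson point process Stein operator
`A g(ξ) = Σ_α λ(α)[g(ξ+δ_α) − g(ξ)] + Σ_α ξ(α)[g(ξ−δ_α) − g(ξ)]`. -/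
noncomputable def ppSteinA {Γ : Type*} [Fintype Γ] [DecidableEq Γ] (lam : Γ → ℝ)
    (g : (Γ → ℕ) → ℝ) (ξ : Γ → ℕ) : ℝ :=
  (∑ α, lam α * (g (ξ + deltaAt α) - g ξ)) + ∑ α, (ξ α : ℝ) * (g (ξ - deltaAt α) - g ξ)

/-- The perturbed Poisson point process Stein operator `B_0`, perturbed at the
configurations `δ_a` and `δ_b`. -/
noncomputable def ppSteinB {Γ : Type*} [Fintype Γ] [DecidableEq Γ] (lam : Γ → ℝ) (a b : Γ)
    (g : (Γ → ℕ) → ℝ) (ξ : Γ → ℕ) : ℝ :=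
  ppSteinA lam g ξ
    + (1 / 2) * (if ξ = deltaAt a then (1 : ℝ) else 0) * (g (ξ + deltaAt b) - g ξ)
    + (1 / 2) * (if ξ = deltaAt b then (1 : ℝ) else 0) * (g (ξ + deltaAt a) - g ξ)
    + (1 / 2) * (if ξ = deltaAt a then (1 : ℝ) else 0) * (g (ξ - deltaAt a) - g ξ)
    + (1 / 2) * (if ξ = deltaAt b then (1 : ℝ) else 0) * (g (ξ - deltaAt b) - g ξ)

namespace PPstein
open Classical in
noncomputable def ind (A : Set ℕ) (k : ℕ) : ℝ := if k ∈ A then 1 else 0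

lemma ind_mem {A : Set ℕ} {k : ℕ} (h : k ∈ A) : ind A k = 1 := by simp [ind, h]
lemma ind_not_mem {A : Set ℕ} {k : ℕ} (h : k ∉ A) : ind A k = 0 := by simp [ind, h]
lemma ind_nonneg (A : Set ℕ) (k : ℕ) : 0 ≤ ind A k := by unfold ind; split <;> norm_num
lemma ind_le_one (A : Set ℕ) (k : ℕ) : ind A k ≤ 1 := by unfold ind; split <;> norm_num

noncomputable def pj (ν : ℝ) (k : ℕ) : ℝ := Real.exp (-ν) * ν ^ k / (Nat.factorial k : ℝ)

lemma pj_nonneg {ν : ℝ} (hν : 0 ≤ ν) (k : ℕ) : 0 ≤ pj ν k := by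
  unfold pj; positivity

lemma summable_pj (ν : ℝ) : Summable (pj ν) := by
  refine ((Real.summable_pow_div_factorial ν).mul_left (Real.exp (-ν))).congr fun k => ?_
  simp [pj, mul_div_assoc]

lemma tsum_pj {ν : ℝ} : ∑' k, pj ν k = 1 := by
  have h : ∑' k : ℕ, ν ^ k / (Nat.factorial k : ℝ) = Real.exp ν := by
    rw [Real.exp_eq_exp_ℝ, NormedSpace.exp_eq_tsum_div]
  calc ∑' k, pj ν k = ∑' k, Real.exp (-ν) * (ν ^ k / (Nat.factorial k : ℝ)) := by
        simp [pj, mul_div_assoc]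
    _ = Real.exp (-ν) * Real.exp ν := by rw [tsum_mul_left, h]
    _ = 1 := by rw [← Real.exp_add]; simp

lemma summable_ind (ν : ℝ) (A : Set ℕ) : Summable (A.indicator (pj ν)) :=
  (summable_pj ν).indicator A

lemma poissonProb_eq (ν : ℝ) (A : Set ℕ) :
    poissonProb ν A = ∑' k, A.indicator (pj ν) k := rfl

lemma poissonProb_nonneg {ν : ℝ} (hν : 0 ≤ ν) (A : Set ℕ) : 0 ≤ poissonProb ν A := by
  rw [poissonProb_eq]
  exact tsum_nonneg fun k => Set.indicator_nonneg (fun j _ => pj_nonneg hν j) k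

lemma poissonProb_le_one {ν : ℝ} (hν : 0 ≤ ν) (A : Set ℕ) : poissonProb ν A ≤ 1 := by
  rw [poissonProb_eq]
  calc ∑' k, A.indicator (pj ν) k ≤ ∑' k, pj ν k := by
        refine Summable.tsum_le_tsum (fun k => ?_) (summable_ind ν A) (summable_pj ν)
        exact Set.indicator_le_self' (fun j _ => pj_nonneg hν j) k
    _ = 1 := tsum_pj

noncomputable def hh (ν : ℝ) (A : Set ℕ) (j : ℕ) : ℝ :=
  if j = 0 then 0 else
    (Nat.factorial (j - 1) : ℝ) * Real.exp ν / ν ^ j *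
      ∑ k ∈ Finset.range j, (ind A k - poissonProb ν A) * pj ν k

lemma hh_succ (ν : ℝ) (A : Set ℕ) (j : ℕ) :
    hh ν A (j + 1) = (Nat.factorial j : ℝ) * Real.exp ν / ν ^ (j + 1) *
      ∑ k ∈ Finset.range (j + 1), (ind A k - poissonProb ν A) * pj ν k := by
  simp [hh]

lemma hh_rec {ν : ℝ} (hν : 0 < ν) (A : Set ℕ) (w : ℕ) :
    ν * hh ν A (w + 1) - (w : ℝ) * hh ν A w
      = ind A w - poissonProb ν A := by
  have hνne : ν ≠ 0 := ne_of_gt hν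
  cases w with
  | zero =>
    rw [hh_succ]
    simp only [zero_add, Nat.cast_zero, zero_mul, sub_zero, Finset.range_one,
      Finset.sum_singleton, pj, pow_zero, Nat.factorial_zero, Nat.cast_one, pow_one]
    rw [Real.exp_neg]
    field_simp
  | succ j =>
    rw [hh_succ, hh_succ, Finset.sum_range_succ (n := j + 1)]
    generalize (∑ k ∈ Finset.range (j + 1), (ind A k - poissonProb ν A) * pj ν k) = S
    push_cast
    have hfac : (Nat.factorial (j + 1) : ℝ) = (j + 1 : ℝ) * (Nat.factorial j : ℝ) := by
      push_cast [Nat.factorial_succ]; ring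
    have hfacne : (Nat.factorial (j + 1) : ℝ) ≠ 0 := by positivity
    simp only [pj, hfac]
    rw [Real.exp_neg]
    have h1 : Real.exp ν ≠ 0 := Real.exp_ne_zero ν
    field_simp
    ring
lemma summable_F {ν : ℝ} (A : Set ℕ) :
    Summable (fun k => (ind A k - poissonProb ν A) * pj ν k) := by
  have h1 : Summable (fun k => ind A k * pj ν k) := by
    refine (summable_ind ν A).congr fun k => ?_
    by_cases h : k ∈ A <;> simp [Set.indicator, h, ind]
  exact (h1.sub ((summable_pj ν).mul_left (poissonProb ν A))).congr fun k => (sub_mul _ _ _).symm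

lemma tsum_F {ν : ℝ} (A : Set ℕ) :
    ∑' k, (ind A k - poissonProb ν A) * pj ν k = 0 := by
  have h1 : Summable (fun k => ind A k * pj ν k) := by
    refine (summable_ind ν A).congr fun k => ?_
    by_cases h : k ∈ A <;> simp [Set.indicator, h, ind]
  have h2 := (summable_pj ν).mul_left (poissonProb ν A)
  have step : ∑' k, (ind A k - poissonProb ν A) * pj ν k
      = (∑' k, ind A k * pj ν k) - ∑' k, poissonProb ν A * pj ν k := by
    rw [← Summable.tsum_sub h1 h2]
    exact tsum_congr fun k => sub_mul _ _ _
  rw [step]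
  have e1 : ∑' k, ind A k * pj ν k = poissonProb ν A := by
    rw [poissonProb_eq]
    refine tsum_congr fun k => ?_
    by_cases h : k ∈ A <;> simp [Set.indicator, h, ind]
  have e2 : ∑' k, poissonProb ν A * pj ν k = poissonProb ν A := by
    rw [tsum_mul_left, tsum_pj, mul_one]
  rw [e1, e2, sub_self]

lemma hh_tail {ν : ℝ} (A : Set ℕ) (j : ℕ) :
    ∑ k ∈ Finset.range j, (ind A k - poissonProb ν A) * pj ν k
      = - ∑' m, (ind A (m + j) - poissonProb ν A) * pj ν (m + j) := by
  have h := Summable.sum_add_tsum_nat_add (f := fun k => (ind A k - poissonProb ν A) * pj ν k) j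
    (summable_F A)
  rw [tsum_F A] at h
  linarith

lemma hh_abs_le {ν : ℝ} (hν : 0 < ν) (A : Set ℕ) (j : ℕ) : |hh ν A j| ≤ Real.exp ν := by
  cases j with
  | zero => simp [hh]; positivity
  | succ i =>
    rw [hh_succ, hh_tail, abs_mul, abs_neg]
    have hπ0 := poissonProb_nonneg hν.le A
    have hπ1 := poissonProb_le_one hν.le A
    have habs : ∀ k, |(ind A k - poissonProb ν A) * pj ν k| ≤ pj ν (k) := by
      intro k
      rw [abs_mul, abs_of_nonneg (pj_nonneg hν.le k)]
      have : |ind A k - poissonProb ν A| ≤ 1 := by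
        rw [abs_le]; constructor
        · have := ind_nonneg A k; linarith
        · have := ind_le_one A k; linarith
      nlinarith [pj_nonneg hν.le k]
    have hsum1 : Summable (fun m => (ind A (m + (i+1)) - poissonProb ν A) * pj ν (m + (i+1))) :=
      (summable_nat_add_iff (f := fun k => (ind A k - poissonProb ν A) * pj ν k) (i+1)).mpr (summable_F A)
    have hsum2 : Summable (fun m => pj ν (m + (i+1))) :=
      (summable_nat_add_iff (f := pj ν) (i+1)).mpr (summable_pj ν)
    have hT : |∑' m, (ind A (m + (i+1)) - poissonProb ν A) * pj ν (m + (i+1))|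
        ≤ ∑' m, pj ν (m + (i+1)) := by
      calc |∑' m, (ind A (m + (i+1)) - poissonProb ν A) * pj ν (m + (i+1))|
          ≤ ∑' m, |(ind A (m + (i+1)) - poissonProb ν A) * pj ν (m + (i+1))| := by
            simpa only [Real.norm_eq_abs] using norm_tsum_le_tsum_norm
              (f := fun m => (ind A (m + (i+1)) - poissonProb ν A) * pj ν (m + (i+1)))
              (by simpa only [Real.norm_eq_abs] using hsum1.abs)
        _ ≤ ∑' m, pj ν (m + (i+1)) := Summable.tsum_le_tsum (fun m => habs _) hsum1.abs hsum2
    have hC : 0 ≤ (Nat.factorial i : ℝ) * Real.exp ν / ν ^ (i + 1) := by positivity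
    rw [abs_of_nonneg hC]
    calc (Nat.factorial i : ℝ) * Real.exp ν / ν ^ (i + 1)
          * |∑' m, (ind A (m + (i+1)) - poissonProb ν A) * pj ν (m + (i+1))|
        ≤ (Nat.factorial i : ℝ) * Real.exp ν / ν ^ (i + 1) * ∑' m, pj ν (m + (i+1)) :=
          mul_le_mul_of_nonneg_left hT hC
      _ = ∑' m, (Nat.factorial i : ℝ) * Real.exp ν / ν ^ (i + 1) * pj ν (m + (i+1)) := by
          rw [tsum_mul_left]
      _ ≤ ∑' m, ν ^ m / (Nat.factorial m : ℝ) := by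
          refine Summable.tsum_le_tsum (fun m => ?_) (hsum2.mul_left _) (Real.summable_pow_div_factorial ν)
          have hkey : (Nat.factorial i : ℝ) * (Nat.factorial m : ℝ)
              ≤ (Nat.factorial (m + (i + 1)) : ℝ) := by
            have h1 : Nat.factorial i * Nat.factorial m ≤ Nat.factorial (i + m) :=
              Nat.le_of_dvd (Nat.factorial_pos _) (Nat.factorial_mul_factorial_dvd_factorial_add i m)
            have h2 : Nat.factorial (i + m) ≤ Nat.factorial (m + (i + 1)) := by
              apply Nat.factorial_le; omega
            exact_mod_cast le_trans h1 h2
          have hpj : pj ν (m + (i+1)) = Real.exp (-ν) * (ν ^ m * ν ^ (i+1)) / (Nat.factorial (m + (i+1)) : ℝ) := by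
            rw [pj, pow_add]
          rw [hpj, Real.exp_neg]
          have hfm : (0:ℝ) < (Nat.factorial m : ℝ) := by positivity
          have hfM : (0:ℝ) < (Nat.factorial (m + (i+1)) : ℝ) := by positivity
          have hexp : (0:ℝ) < Real.exp ν := Real.exp_pos ν
          have hν1 : (0:ℝ) < ν ^ (i+1) := by positivity
          have hνm : (0:ℝ) ≤ ν ^ m := by positivity
          calc (Nat.factorial i : ℝ) * Real.exp ν / ν ^ (i + 1) *
                ((Real.exp ν)⁻¹ * (ν ^ m * ν ^ (i+1)) / (Nat.factorial (m + (i+1)) : ℝ))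
              = ν ^ m * ((Nat.factorial i : ℝ) * (Nat.factorial m : ℝ))
                  / ((Nat.factorial (m + (i+1)) : ℝ) * (Nat.factorial m : ℝ)) := by
                field_simp
            _ ≤ ν ^ m * (Nat.factorial (m + (i+1)) : ℝ)
                  / ((Nat.factorial (m + (i+1)) : ℝ) * (Nat.factorial m : ℝ)) := by
                gcongr
            _ = ν ^ m / (Nat.factorial m : ℝ) := by
                rw [mul_comm ((Nat.factorial (m + (i+1)) : ℝ)) _, ← div_div]
                field_simp
      _ = Real.exp ν := by
          rw [Real.exp_eq_exp_ℝ, NormedSpace.exp_eq_tsum_div]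
lemma poisson_decomp {ν : ℝ} (hν : 0 < ν) (A : Set ℕ) :
    ∃ R : ℝ, 0 ≤ R ∧ R ≤ 1 - Real.exp (-ν) - ν * Real.exp (-ν) ∧
      poissonProb ν A = ind A 0 * Real.exp (-ν) + ind A 1 * (ν * Real.exp (-ν)) + R := by
  set R : ℝ := ∑' m, A.indicator (pj ν) (m + 2) with hR
  have hsumInd := summable_ind ν A
  have hsum2 : Summable (fun m => A.indicator (pj ν) (m + 2)) :=
    (summable_nat_add_iff (f := A.indicator (pj ν)) 2).mpr hsumInd
  have hsum2' : Summable (fun m => pj ν (m + 2)) :=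
    (summable_nat_add_iff (f := pj ν) 2).mpr (summable_pj ν)
  have hdec := Summable.sum_add_tsum_nat_add (f := A.indicator (pj ν)) 2 hsumInd
  have hdec' := Summable.sum_add_tsum_nat_add (f := pj ν) 2 (summable_pj ν)
  rw [tsum_pj] at hdec'
  have hpj0 : pj ν 0 = Real.exp (-ν) := by simp [pj]
  have hpj1 : pj ν 1 = ν * Real.exp (-ν) := by simp [pj]; ring
  refine ⟨R, ?_, ?_, ?_⟩
  · exact tsum_nonneg fun m => Set.indicator_nonneg (fun j _ => pj_nonneg hν.le j) _
  · have hle : R ≤ ∑' m, pj ν (m + 2) :=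
      Summable.tsum_le_tsum (fun m => Set.indicator_le_self' (fun j _ => pj_nonneg hν.le j) _) hsum2 hsum2'
    have : ∑' m, pj ν (m + 2) = 1 - Real.exp (-ν) - ν * Real.exp (-ν) := by
      have : pj ν 0 + pj ν 1 + ∑' m, pj ν (m + 2) = 1 := by
        rw [← hdec']; rw [Finset.sum_range_succ, Finset.sum_range_one]
      rw [hpj0, hpj1] at this; linarith
    linarith
  · have hind0 : A.indicator (pj ν) 0 = ind A 0 * Real.exp (-ν) := by
      by_cases h : (0:ℕ) ∈ A <;> simp [Set.indicator, h, ind, hpj0]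
    have hind1 : A.indicator (pj ν) 1 = ind A 1 * (ν * Real.exp (-ν)) := by
      by_cases h : (1:ℕ) ∈ A <;> simp [Set.indicator, h, ind, hpj1]
    rw [poissonProb_eq, ← hdec, Finset.sum_range_succ, Finset.sum_range_one, hind0, hind1]

lemma key_bound {ν : ℝ} (hν : 0 < ν) (A : Set ℕ) :
    |hh ν A 2 - hh ν A 1| ≤ (1 - Real.exp (-ν)) / ν := by
  have hνne : ν ≠ 0 := ne_of_gt hν
  have h1 : hh ν A 1 = (ind A 0 - poissonProb ν A) / ν := by
    rw [show (1:ℕ) = 0 + 1 from rfl, hh_succ]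
    simp only [zero_add, Finset.sum_range_one, pj, pow_zero, Nat.factorial_zero, Nat.cast_one, pow_one]
    rw [Real.exp_neg]
    field_simp
  have h2 : hh ν A 2 = ((ind A 0 - poissonProb ν A) + ν * (ind A 1 - poissonProb ν A)) / ν ^ 2 := by
    rw [show (2:ℕ) = 1 + 1 from rfl, hh_succ]
    rw [Finset.sum_range_succ, Finset.sum_range_one]
    simp only [pj, pow_zero, pow_one, Nat.factorial_zero, Nat.factorial_one, Nat.cast_one]
    rw [Real.exp_neg]
    field_simp
  have hdiff : hh ν A 2 - hh ν A 1 = ((1 - ν) * ind A 0 + ν * ind A 1 - poissonProb ν A) / ν ^ 2 := by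
    rw [h1, h2]; field_simp; ring
  obtain ⟨R, hR0, hR1, hπeq⟩ := poisson_decomp hν A
  have hE0 : (0:ℝ) < Real.exp (-ν) := Real.exp_pos _
  have hE1 : Real.exp (-ν) ≤ 1 := by
    rw [Real.exp_le_one_iff]; linarith
  have hE2 : 1 - ν ≤ Real.exp (-ν) := by
    have := Real.add_one_le_exp (-ν); linarith
  have hnum : |(1 - ν) * ind A 0 + ν * ind A 1 - poissonProb ν A| ≤ ν * (1 - Real.exp (-ν)) := by
    have hq0 : ind A 0 = 0 ∨ ind A 0 = 1 := by
      by_cases h : (0:ℕ) ∈ A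
      · right; exact ind_mem h
      · left; exact ind_not_mem h
    have hq1 : ind A 1 = 0 ∨ ind A 1 = 1 := by
      by_cases h : (1:ℕ) ∈ A
      · right; exact ind_mem h
      · left; exact ind_not_mem h
    rw [hπeq, abs_le]
    rcases hq0 with h|h <;> rcases hq1 with h'|h' <;> rw [h, h'] <;> constructor <;>
      nlinarith [Real.exp_pos (-ν)]
  rw [hdiff, abs_div, abs_of_nonneg (by positivity : (0:ℝ) ≤ ν ^ 2)]
  rw [div_le_div_iff₀ (by positivity) hν]
  calc |(1 - ν) * ind A 0 + ν * ind A 1 - poissonProb ν A| * ν ≤ (ν * (1 - Real.exp (-ν))) * ν := by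
        apply mul_le_mul_of_nonneg_right hnum hν.le
    _ = (1 - Real.exp (-ν)) * ν ^ 2 := by ring
noncomputable def ff (ν : ℝ) (A : Set ℕ) (j : ℕ) : ℝ := ∑ i ∈ Finset.range j, hh ν A (i + 1)

lemma ff_succ (ν : ℝ) (A : Set ℕ) (j : ℕ) : ff ν A (j + 1) = ff ν A j + hh ν A (j + 1) :=
  Finset.sum_range_succ _ _

lemma ff_bound {ν : ℝ} (hν : 0 < ν) (A : Set ℕ) (j : ℕ) : |ff ν A j| ≤ j * Real.exp ν := by
  calc |ff ν A j| ≤ ∑ i ∈ Finset.range j, |hh ν A (i + 1)| := Finset.abs_sum_le_sum_abs _ _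
    _ ≤ ∑ i ∈ Finset.range j, Real.exp ν :=
        Finset.sum_le_sum fun i _ => hh_abs_le hν A (i + 1)
    _ = j * Real.exp ν := by rw [Finset.sum_const, Finset.card_range, nsmul_eq_mul]
section Conf
variable {Γ : Type*} [Fintype Γ] [DecidableEq Γ]

lemma sum_deltaAt (β : Γ) : ∑ α, deltaAt β α = 1 := by
  simp [deltaAt]

lemma sum_add_delta (ξ : Γ → ℕ) (β : Γ) : ∑ α, (ξ + deltaAt β) α = (∑ α, ξ α) + 1 := by
  simp only [Pi.add_apply, Finset.sum_add_distrib, sum_deltaAt]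

lemma sum_sub_delta (ξ : Γ → ℕ) (β : Γ) (hβ : 1 ≤ ξ β) :
    ∑ α, (ξ - deltaAt β) α = (∑ α, ξ α) - 1 := by
  have h1 : ∑ α, (ξ - deltaAt β) α = (ξ β - 1) + ∑ α ∈ Finset.univ.erase β, ξ α := by
    rw [← Finset.add_sum_erase _ _ (Finset.mem_univ β)]
    congr 1
    · simp [deltaAt]
    · refine Finset.sum_congr rfl fun x hx => ?_
      have hne : x ≠ β := Finset.ne_of_mem_erase hx
      simp [deltaAt, hne]
  have h2 : ∑ α, ξ α = ξ β + ∑ α ∈ Finset.univ.erase β, ξ α :=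
    (Finset.add_sum_erase _ _ (Finset.mem_univ β)).symm
  omega

lemma delta_sub_self (β : Γ) : deltaAt β - deltaAt β = (0 : Γ → ℕ) := by
  funext x; simp [deltaAt]

lemma deltaAt_ne {a b : Γ} (hab : a ≠ b) : deltaAt a ≠ deltaAt b := by
  intro h
  have := congrFun h a
  simp [deltaAt, hab] at this

lemma steinA_count (lam : Γ → ℝ) (φ : ℕ → ℝ) (ξ : Γ → ℕ) :
    ppSteinA lam (fun ζ => φ (∑ α, ζ α)) ξ
      = (∑ α, lam α) * (φ ((∑ α, ξ α) + 1) - φ (∑ α, ξ α))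
        + ((∑ α, ξ α : ℕ) : ℝ) * (φ ((∑ α, ξ α) - 1) - φ (∑ α, ξ α)) := by
  unfold ppSteinA
  congr 1
  · have e1 : ∀ β ∈ Finset.univ, lam β * (φ (∑ α, (ξ + deltaAt β) α) - φ (∑ α, ξ α))
        = lam β * (φ ((∑ α, ξ α) + 1) - φ (∑ α, ξ α)) := fun β _ => by rw [sum_add_delta]
    rw [Finset.sum_congr rfl e1, ← Finset.sum_mul]
  · have e2 : ∀ β ∈ Finset.univ, (ξ β : ℝ) * (φ (∑ α, (ξ - deltaAt β) α) - φ (∑ α, ξ α))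
        = (ξ β : ℝ) * (φ ((∑ α, ξ α) - 1) - φ (∑ α, ξ α)) := by
      intro β _
      by_cases hβ : ξ β = 0
      · simp [hβ]
      · rw [sum_sub_delta ξ β (by omega)]
    rw [Finset.sum_congr rfl e2, ← Finset.sum_mul, ← Nat.cast_sum]

end Conf
noncomputable def eN (ν : ℝ) (A : Set ℕ) (N : ℕ) (w : ℕ) : ℝ :=
  if w < N then ind A w - poissonProb ν A
  else if w = N then -((N : ℝ) * hh ν A N) else 0

section Main
variable {Γ : Type*} [Fintype Γ] [DecidableEq Γ]

lemma gN_A_part (lam : Γ → ℝ) (hν : 0 < ∑ α, lam α) (A : Set ℕ) {N : ℕ} (hN : 2 ≤ N)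
    (ξ : Γ → ℕ) :
    ppSteinA lam (fun ζ => ff (∑ α, lam α) A (min (∑ α, ζ α) N)) ξ
      = eN (∑ α, lam α) A N (∑ α, ξ α) := by
  set ν := ∑ α, lam α with hνdef
  rw [steinA_count lam (fun j => ff ν A (min j N)) ξ]
  generalize (∑ α, ξ α) = w
  rcases lt_trichotomy w N with h | h | h
  · have h1 : min w N = w := min_eq_left h.le
    have h2 : min (w + 1) N = w + 1 := min_eq_left (by omega)
    have h3 : min (w - 1) N = w - 1 := min_eq_left (by omega)
    rw [h1, h2, h3, eN, if_pos h]
    cases w with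
    | zero =>
      have := hh_rec hν A 0
      simp only [Nat.cast_zero, zero_mul, sub_zero] at this
      simpa [ff_succ, ff] using this
    | succ v =>
      have := hh_rec hν A (v + 1)
      have hff2 : ff ν A (v + 1 + 1) - ff ν A (v + 1) = hh ν A (v + 2) := by
        rw [ff_succ]; ring
      have hff1 : ff ν A (v + 1 - 1) - ff ν A (v + 1) = -hh ν A (v + 1) := by
        simp only [Nat.add_sub_cancel]
        rw [ff_succ]; ring
      rw [hff2, hff1]
      push_cast at this ⊢
      linarith
  · subst h
    rw [min_self, min_eq_right (by omega : w ≤ w + 1), min_eq_left (by omega : w - 1 ≤ w),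
      eN, if_neg (lt_irrefl w), if_pos rfl]
    obtain ⟨M, rfl⟩ : ∃ M, w = M + 1 := ⟨w - 1, by omega⟩
    have hff1 : ff ν A (M + 1 - 1) - ff ν A (M + 1) = -hh ν A (M + 1) := by
      simp only [Nat.add_sub_cancel]
      rw [ff_succ]; ring
    rw [hff1]
    ring
  · have h1 : min w N = N := min_eq_right h.le
    have h2 : min (w + 1) N = N := min_eq_right (by omega)
    have h3 : min (w - 1) N = N := min_eq_right (by omega)
    rw [h1, h2, h3, eN, if_neg (by omega), if_neg (by omega)]
    ring

lemma steinB_gN (lam : Γ → ℝ) (a b : Γ) (hab : a ≠ b) (hν : 0 < ∑ α, lam α)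
    (A : Set ℕ) {N : ℕ} (hN : 2 ≤ N) (ξ : Γ → ℕ) :
    ppSteinB lam a b (fun ζ => ff (∑ α, lam α) A (min (∑ α, ζ α) N)) ξ
      = eN (∑ α, lam α) A N (∑ α, ξ α)
        + (if ξ = deltaAt a then
            (hh (∑ α, lam α) A 2 - hh (∑ α, lam α) A 1) / 2 else 0)
        + (if ξ = deltaAt b then
            (hh (∑ α, lam α) A 2 - hh (∑ α, lam α) A 1) / 2 else 0) := by
  set ν := ∑ α, lam α with hνdef
  have hmin1 : min 1 N = 1 := min_eq_left (by omega)
  have hmin2 : min 2 N = 2 := min_eq_left hN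
  have hdsum : ∀ c : Γ, ∑ α, deltaAt c α = 1 := sum_deltaAt
  have hff0 : ff ν A 0 = 0 := rfl
  have hkey : ∀ c d : Γ, c ≠ d →
      (ff ν A (min (∑ α, (deltaAt c + deltaAt d) α) N) - ff ν A (min (∑ α, deltaAt c α) N))
        + (ff ν A (min (∑ α, (deltaAt c - deltaAt c) α) N) - ff ν A (min (∑ α, deltaAt c α) N))
      = hh ν A 2 - hh ν A 1 := by
    intro c d hcd
    rw [sum_add_delta, hdsum c, delta_sub_self, hmin1]
    have : ∑ α, (0 : Γ → ℕ) α = 0 := by simp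
    rw [this, hmin2]
    simp only [Nat.min_eq_left (by omega : 0 ≤ N)]
    have e2 : ff ν A 2 = ff ν A 1 + hh ν A 2 := ff_succ ν A 1
    have e1 : ff ν A 1 = ff ν A 0 + hh ν A 1 := ff_succ ν A 0
    rw [e2, e1, hff0]
    ring
  unfold ppSteinB
  rw [gN_A_part lam hν A hN ξ]
  by_cases hξa : ξ = deltaAt a
  · have hξb : ξ ≠ deltaAt b := by rw [hξa]; exact deltaAt_ne hab
    rw [if_pos hξa, if_neg hξb, if_pos hξa, if_neg hξb]
    subst hξa
    have := hkey a b hab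
    ring_nf
    ring_nf at this
    linarith
  · rw [if_neg hξa, if_neg hξa]
    by_cases hξb : ξ = deltaAt b
    · rw [if_pos hξb, if_pos hξb]
      subst hξb
      have := hkey b a hab.symm
      ring_nf
      ring_nf at this
      linarith
    · rw [if_neg hξb, if_neg hξb]
      ring

end Main
end PPstein

open PPstein Filter Topology

/-- In the setting of the perturbed Poisson point process with
`|λ| = Σ_α λ(α) > 0`, the total number of points `|Ψ| = Σ_α Ψ(α)` satisfies
`d_TV(L(|Ψ|), Po(|λ|)) ≤ P[Ψ = δ_a] (1 − e^{−|λ|}) / |λ|`. -/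
theorem pp_perturbed_total_count_dTV
    {Ω : Type*} [MeasurableSpace Ω] (P : Measure Ω) [IsProbabilityMeasure P]
    {Γ : Type*} [Fintype Γ] [DecidableEq Γ] (a b : Γ) (hab : a ≠ b)
    (lam : Γ → ℝ) (hlam : ∀ α, 0 ≤ lam α) (hlamab : lam a = lam b)
    (hlampos : 0 < ∑ α, lam α)
    (Ψ : Ω → Γ → ℕ) (hΨ : Measurable Ψ)
    (hint : Integrable (fun ω => ∑ α, (Ψ ω α : ℝ)) P)
    (hstein : ∀ g : (Γ → ℕ) → ℝ, (∃ C : ℝ, ∀ ξ, |g ξ| ≤ C) →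
      ∫ ω, ppSteinB lam a b g (Ψ ω) ∂P = 0)
    (hsym : P {ω | Ψ ω = deltaAt a} = P {ω | Ψ ω = deltaAt b}) :
    (⨆ A : Set ℕ, |(P {ω | (∑ α, Ψ ω α) ∈ A}).toReal - poissonProb (∑ α, lam α) A|) ≤
      (P {ω | Ψ ω = deltaAt a}).toReal *
        (1 - Real.exp (-(∑ α, lam α))) / (∑ α, lam α) := by
  classical
  have hν : 0 < ∑ α, lam α := hlampos
  set ν : ℝ := ∑ α, lam α with hνdef
  have hW : Measurable (fun ω => ∑ α, Ψ ω α) :=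
    Finset.measurable_sum _ fun α _ => (measurable_pi_apply α).comp hΨ
  have hSa : MeasurableSet {ω | Ψ ω = deltaAt a} := hΨ (measurableSet_singleton _)
  have hSb : MeasurableSet {ω | Ψ ω = deltaAt b} := hΨ (measurableSet_singleton _)
  set pa : ℝ := (P {ω | Ψ ω = deltaAt a}).toReal with hpadef
  set pb : ℝ := (P {ω | Ψ ω = deltaAt b}).toReal with hpbdef
  have hpapb : pb = pa := by rw [hpadef, hpbdef, hsym]
  have hpa0 : 0 ≤ pa := ENNReal.toReal_nonneg
  refine ciSup_le fun A => ?_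
  set c : ℝ := (hh ν A 2 - hh ν A 1) / 2 with hcdef
  -- Step 1 : the Stein identity for each truncation level N ≥ 2
  have ieN : ∀ N : ℕ, Integrable (fun ω => eN ν A N (∑ α, Ψ ω α)) P := by
    intro N
    have hm : Measurable fun ω => eN ν A N (∑ α, Ψ ω α) :=
      (measurable_from_nat (f := eN ν A N)).comp hW
    refine Integrable.mono' (integrable_const (1 + N * Real.exp ν))
      hm.aestronglyMeasurable (Filter.Eventually.of_forall fun ω => ?_)
    have hπ0 := poissonProb_nonneg hν.le A
    have hπ1 := poissonProb_le_one hν.le A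
    have hq0 := ind_nonneg A (∑ α, Ψ ω α)
    have hq1 := ind_le_one A (∑ α, Ψ ω α)
    have hexp : (0:ℝ) ≤ Real.exp ν := (Real.exp_pos ν).le
    rw [Real.norm_eq_abs]
    unfold eN
    split
    · rw [abs_le]
      constructor <;> nlinarith [Nat.cast_nonneg (α := ℝ) N]
    · split
      · rw [abs_neg, abs_mul, Nat.abs_cast]
        have hb := hh_abs_le hν A N
        have hN0 : (0:ℝ) ≤ (N:ℝ) := Nat.cast_nonneg N
        nlinarith [abs_nonneg (hh ν A N)]
      · simp only [abs_zero]
        positivity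
  have ia : Integrable ({ω | Ψ ω = deltaAt a}.indicator (fun _ => c)) P :=
    (integrable_const c).indicator hSa
  have ib : Integrable ({ω | Ψ ω = deltaAt b}.indicator (fun _ => c)) P :=
    (integrable_const c).indicator hSb
  have hstep : ∀ N : ℕ, 2 ≤ N →
      ∫ ω, eN ν A N (∑ α, Ψ ω α) ∂P = -(pa * c + pb * c) := by
    intro N hN
    have hgb : ∃ C : ℝ, ∀ ξ : Γ → ℕ, |ff ν A (min (∑ α, ξ α) N)| ≤ C := by
      refine ⟨N * Real.exp ν, fun ξ => (ff_bound hν A _).trans ?_⟩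
      have h1 : ((min (∑ α, ξ α) N : ℕ) : ℝ) ≤ (N : ℝ) := by
        exact_mod_cast Nat.min_le_right _ _
      have hexp : (0:ℝ) ≤ Real.exp ν := (Real.exp_pos ν).le
      exact mul_le_mul_of_nonneg_right h1 hexp
    have h0 := hstein (fun ζ => ff ν A (min (∑ α, ζ α) N)) hgb
    have hpt : ∀ ω, ppSteinB lam a b (fun ζ => ff ν A (min (∑ α, ζ α) N)) (Ψ ω)
        = eN ν A N (∑ α, Ψ ω α)
          + ({ω | Ψ ω = deltaAt a}.indicator (fun _ => c) ω)
          + ({ω | Ψ ω = deltaAt b}.indicator (fun _ => c) ω) := by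
      intro ω
      rw [steinB_gN lam a b hab hν A hN (Ψ ω)]
      rw [Set.indicator_apply, Set.indicator_apply]
      simp only [Set.mem_setOf_eq, hcdef]
      rfl
    rw [integral_congr_ae (Filter.Eventually.of_forall hpt)] at h0
    have i12 : Integrable (fun ω => eN ν A N (∑ α, Ψ ω α)
        + {ω | Ψ ω = deltaAt a}.indicator (fun _ => c) ω) P := (ieN N).add ia
    rw [integral_add i12 ib, integral_add (ieN N) ia,
      integral_indicator_const c hSa, integral_indicator_const c hSb] at h0
    simp only [smul_eq_mul] at h0
    rw [measureReal_def, measureReal_def, ← hpadef, ← hpbdef] at h0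
    linarith
  -- Step 2 : dominated convergence as N → ∞
  have hbound_int : Integrable (fun ω => 1 + Real.exp ν * ∑ α, (Ψ ω α : ℝ)) P :=
    (integrable_const 1).add (hint.const_mul (Real.exp ν))
  have hcast : ∀ ω, ((∑ α, Ψ ω α : ℕ) : ℝ) = ∑ α, (Ψ ω α : ℝ) := fun ω => Nat.cast_sum _ _
  have hlim : Tendsto (fun N => ∫ ω, eN ν A N (∑ α, Ψ ω α) ∂P) atTop
      (𝓝 (∫ ω, (ind A (∑ α, Ψ ω α) - poissonProb ν A) ∂P)) := by
    refine tendsto_integral_of_dominated_convergence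
      (fun ω => 1 + Real.exp ν * ∑ α, (Ψ ω α : ℝ))
      (fun N => ((measurable_from_nat (f := eN ν A N)).comp hW).aestronglyMeasurable)
      hbound_int (fun N => Filter.Eventually.of_forall fun ω => ?_)
      (Filter.Eventually.of_forall fun ω => ?_)
    · have hπ0 := poissonProb_nonneg hν.le A
      have hπ1 := poissonProb_le_one hν.le A
      have hq0 := ind_nonneg A (∑ α, Ψ ω α)
      have hq1 := ind_le_one A (∑ α, Ψ ω α)
      have hexp : (0:ℝ) ≤ Real.exp ν := (Real.exp_pos ν).le
      have hsum0 : (0:ℝ) ≤ ∑ α, (Ψ ω α : ℝ) :=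
        Finset.sum_nonneg fun α _ => Nat.cast_nonneg _
      show ‖eN ν A N (∑ α, Ψ ω α)‖ ≤ 1 + Real.exp ν * ∑ α, (Ψ ω α : ℝ)
      rw [Real.norm_eq_abs]
      unfold eN
      have hmm := mul_nonneg hexp hsum0
      split
      · rw [abs_le]
        constructor <;> nlinarith
      · split
        · rename_i h1 h2
          rw [abs_neg, abs_mul, Nat.abs_cast]
          have hb := hh_abs_le hν A N
          have hNeq : ((N:ℕ) : ℝ) = ∑ α, (Ψ ω α : ℝ) := by rw [← h2, hcast]
          rw [hNeq]
          nlinarith [abs_nonneg (hh ν A N)]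
        · simp only [abs_zero]
          positivity
    · refine tendsto_const_nhds.congr' ?_
      filter_upwards [eventually_ge_atTop ((∑ α, Ψ ω α) + 1)] with N hN
      unfold eN
      rw [if_pos (by omega)]
  have hconst : Tendsto (fun N => ∫ ω, eN ν A N (∑ α, Ψ ω α) ∂P) atTop
      (𝓝 (-(pa * c + pb * c))) := by
    refine tendsto_const_nhds.congr' ?_
    filter_upwards [eventually_ge_atTop 2] with N hN
    exact (hstep N hN).symm
  have heq : ∫ ω, (ind A (∑ α, Ψ ω α) - poissonProb ν A) ∂P = -(pa * c + pb * c) :=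
    tendsto_nhds_unique hlim hconst
  -- Step 3 : identify the integral
  have hSA : MeasurableSet {ω | (∑ α, Ψ ω α) ∈ A} := hW (MeasurableSet.of_discrete)
  have hindeq : ∀ ω, ind A (∑ α, Ψ ω α)
      = {ω | (∑ α, Ψ ω α) ∈ A}.indicator (fun _ => (1:ℝ)) ω := by
    intro ω
    simp only [Set.indicator_apply, Set.mem_setOf_eq]
    by_cases h : (∑ α, Ψ ω α) ∈ A
    · rw [ind_mem h, if_pos h]
    · rw [ind_not_mem h, if_neg h]
  have hii : Integrable ({ω | (∑ α, Ψ ω α) ∈ A}.indicator (fun _ => (1:ℝ))) P :=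
    (integrable_const 1).indicator hSA
  have hval : ∫ ω, (ind A (∑ α, Ψ ω α) - poissonProb ν A) ∂P
      = (P {ω | (∑ α, Ψ ω α) ∈ A}).toReal - poissonProb ν A := by
    have hcg : ∀ ω, ind A (∑ α, Ψ ω α) - poissonProb ν A
        = {ω | (∑ α, Ψ ω α) ∈ A}.indicator (fun _ => (1:ℝ)) ω - poissonProb ν A := by
      intro ω; rw [hindeq]
    rw [integral_congr_ae (Filter.Eventually.of_forall hcg),
      integral_sub hii (integrable_const _), integral_indicator_const _ hSA, integral_const]
    simp [measure_univ, measureReal_def]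
  rw [hval] at heq
  rw [heq]
  have hkb := key_bound hν A
  rw [hpapb, abs_neg]
  have : |pa * c + pa * c| = pa * |hh ν A 2 - hh ν A 1| := by
    rw [show pa * c + pa * c = pa * (hh ν A 2 - hh ν A 1) from by rw [hcdef]; ring,
      abs_mul, abs_of_nonneg hpa0]
  rw [this]
  calc pa * |hh ν A 2 - hh ν A 1| ≤ pa * ((1 - Real.exp (-ν)) / ν) :=
        mul_le_mul_of_nonneg_left hkb hpa0
    _ = pa * (1 - Real.exp (-ν)) / ν := by ring
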